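/- arXiv:2504.08109 — 7 statements merged into one kernel-verified Lean document; each statement's English description precedes it below -/
import Mathlib

section
/- In a Nelson lattice, (a * b)² = (a ∧ b)² for all a, b. -/
/-- A Nelson (residuated) lattice: a bounded lattice with a commutative monoid
operation `mul` (unit `⊤`) residuated by `imp`, which is involutive
(`∼∼a = a` where `∼a = a ⇒ ⊥`) and satisfies the Nelson identity
`((a² ⇒ b) ⊓ ((∼b)² ⇒ ∼a)) ⇒ (a ⇒ b) = ⊤`. -/
structure NelsonStruct (A : Type*) [Lattice A] [BoundedOrder A] where
  mul : A → A → A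
  imp : A → A → A
  mul_comm : ∀ a b, mul a b = mul b a
  mul_assoc : ∀ a b c, mul (mul a b) c = mul a (mul b c)
  top_mul : ∀ a, mul ⊤ a = a
  res : ∀ a b c, mul a b ≤ c ↔ b ≤ imp a c
  involutive : ∀ a, imp (imp a ⊥) ⊥ = a
  nelson : ∀ a b,
    imp ((imp (mul a a) b) ⊓
         (imp (mul (imp b ⊥) (imp b ⊥)) (imp a ⊥))) (imp a b) = ⊤

namespace NelsonStruct

variable {A : Type*} [Lattice A] [BoundedOrder A] (N : NelsonStruct A)

/-- The square `a² = a * a`. -/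
def sq (a : A) : A := N.mul a a

/-- The strong negation `∼a = a ⇒ ⊥`. -/
def sneg (a : A) : A := N.imp a ⊥

end NelsonStruct

namespace NelsonStruct

variable {A : Type*} [Lattice A] [BoundedOrder A] (N : NelsonStruct A)

lemma mul_top' (a : A) : N.mul a ⊤ = a := by rw [N.mul_comm, N.top_mul]

lemma mul_le_mul' {a b c d : A} (h1 : a ≤ b) (h2 : c ≤ d) :
    N.mul a c ≤ N.mul b d := by
  have h3 : N.mul b c ≤ N.mul b d :=
    (N.res b c (N.mul b d)).mpr (le_trans h2 ((N.res b d (N.mul b d)).mp le_rfl))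
  have h4 : N.mul a c ≤ N.mul b c := by
    rw [N.mul_comm a c, N.mul_comm b c]
    exact (N.res c a (N.mul c b)).mpr (le_trans h1 ((N.res c b (N.mul c b)).mp le_rfl))
  exact le_trans h4 h3

lemma mul_le_left' (a b : A) : N.mul a b ≤ a := by
  have := N.mul_le_mul' (le_refl a) (le_top (a := b))
  rwa [N.mul_top'] at this

lemma mul_le_right' (a b : A) : N.mul a b ≤ b := by
  rw [N.mul_comm]; exact N.mul_le_left' b a

lemma imp_top' (z : A) : N.imp ⊤ z = z := by
  apply le_antisymm
  · have := (N.res ⊤ (N.imp ⊤ z) z).mpr le_rfl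
    rwa [N.top_mul] at this
  · exact (N.res ⊤ z z).mp (by rw [N.top_mul])

lemma imp_eq_top_iff {x y : A} : N.imp x y = ⊤ ↔ x ≤ y := by
  constructor
  · intro h
    have : (⊤ : A) ≤ N.imp x y := h.ge
    have := (N.res x ⊤ y).mpr this
    rwa [N.mul_top'] at this
  · intro h
    refine top_unique ((N.res x ⊤ y).mp ?_)
    rw [N.mul_top']; exact h

lemma mul_imp_bot_le (z : A) : N.mul z (N.imp z ⊥) ≤ ⊥ :=
  (N.res z (N.imp z ⊥) ⊥).mpr le_rfl

/-- From the Nelson identity: if `a³ ≤ ⊥` then `a² ≤ ⊥`. -/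
lemma sq_le_bot_of_cube_le_bot {a : A} (h : N.mul (N.mul a a) a ≤ ⊥) :
    N.mul a a ≤ ⊥ := by
  have h1 : N.imp (N.mul a a) (N.imp a ⊥) = ⊤ := by
    rw [N.imp_eq_top_iff]
    exact (N.res a (N.mul a a) ⊥).mp (by rwa [N.mul_comm])
  have hn := N.nelson a (N.imp a ⊥)
  rw [N.involutive, h1, inf_idem, N.imp_top'] at hn
  have h2 : a ≤ N.imp a ⊥ := N.imp_eq_top_iff.mp hn
  exact (N.res a a ⊥).mpr h2

lemma mul_mul_mul_comm' (a b c d : A) :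
    N.mul (N.mul a b) (N.mul c d) = N.mul (N.mul a c) (N.mul b d) := by
  rw [N.mul_assoc, N.mul_assoc, ← N.mul_assoc b c d, N.mul_comm b c,
    N.mul_assoc c b d]

/-- 3-potency: `x³ = x²`. -/
lemma cube_eq_sq (x : A) : N.mul (N.mul x x) x = N.mul x x := by
  set t := N.imp (N.mul (N.mul x x) x) ⊥ with ht
  set w := N.mul t x with hw
  have hwx : w ≤ x := N.mul_le_right' t x
  have hw3 : N.mul (N.mul w w) w ≤ ⊥ := by
    have step : N.mul (N.mul w w) w ≤ N.mul (N.mul w x) x :=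
      N.mul_le_mul' (N.mul_le_mul' le_rfl hwx) hwx
    have heq : N.mul (N.mul w x) x = N.mul t (N.mul (N.mul x x) x) := by
      rw [hw, N.mul_assoc, N.mul_assoc, N.mul_comm x (N.mul x x)]
    have hb : N.mul t (N.mul (N.mul x x) x) ≤ ⊥ := by
      rw [N.mul_comm]; exact N.mul_imp_bot_le _
    exact le_trans step (heq ▸ hb)
  have hw2 : N.mul w w ≤ ⊥ := N.sq_le_bot_of_cube_le_bot hw3
  have hkey : N.mul (N.mul x x) (N.mul t t) ≤ ⊥ := by
    have : N.mul (N.mul x x) (N.mul t t) = N.mul w w := by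
      rw [hw, N.mul_mul_mul_comm', N.mul_comm x t]
    rwa [this]
  have h2 : N.imp (N.mul t t) (N.imp (N.mul x x) ⊥) = ⊤ := by
    rw [N.imp_eq_top_iff]
    exact (N.res (N.mul x x) (N.mul t t) ⊥).mp hkey
  have h1 : N.imp (N.mul (N.mul x x) (N.mul x x)) (N.mul (N.mul x x) x) = ⊤ := by
    rw [N.imp_eq_top_iff]
    exact N.mul_le_mul' le_rfl (N.mul_le_left' x x)
  have hn := N.nelson (N.mul x x) (N.mul (N.mul x x) x)
  rw [← ht, h1, h2, inf_idem, N.imp_top'] at hn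
  exact le_antisymm (N.mul_le_left' _ _) (N.imp_eq_top_iff.mp hn)

end NelsonStruct

/-- In a Nelson lattice, `(a * b)² = (a ∧ b)²` for all `a, b`. -/
theorem NelsonStruct.sq_mul_eq_sq_inf {A : Type*} [Lattice A] [BoundedOrder A]
    (N : NelsonStruct A) (a b : A) :
    N.sq (N.mul a b) = N.sq (a ⊓ b) := by
  unfold sq
  set m := a ⊓ b with hm
  apply le_antisymm
  · have h : N.mul a b ≤ m :=
      le_inf (N.mul_le_left' a b) (N.mul_le_right' a b)
    exact N.mul_le_mul' h h
  · have h : N.mul m m ≤ N.mul a b :=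
      N.mul_le_mul' inf_le_left inf_le_right
    have h4 : N.mul (N.mul m m) (N.mul m m) = N.mul m m := by
      rw [← N.mul_assoc, N.cube_eq_sq, N.cube_eq_sq]
    calc N.mul m m = N.mul (N.mul m m) (N.mul m m) := h4.symm
      _ ≤ N.mul (N.mul a b) (N.mul a b) := N.mul_le_mul' h h
end

section
/- Let H be a Heyting algebra and F a Boolean filter of H. Then the set N(H,F) = {(x,y) ∈ H × H : x ∧ y = ⊥ and x ∨ y ∈ F}, with operations (x,y)∨(s,t)=(x∨s, y∧t), (x,y)∧(s,t)=(x∧s, y∨t), (x,y)*(s,t)=(x∧s, (x→t)∧(s→y)), (x,y)⇒(s,t)=((x→s)∧(t→y), x∧t), ⊤=(⊤,⊥), ⊥=(⊥,⊤), is a Nelson lattice. -/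
section Twist

variable {H : Type*} [HeytingAlgebra H]

/-- The twist order: `(x,y) ≤ (s,t)` iff `x ≤ s` and `t ≤ y`. -/
def tle (p q : H × H) : Prop := p.1 ≤ q.1 ∧ q.2 ≤ p.2

/-- Twist join: `(x,y) ∨ (s,t) = (x ∨ s, y ∧ t)`. -/
def tvee (p q : H × H) : H × H := (p.1 ⊔ q.1, p.2 ⊓ q.2)

/-- Twist meet: `(x,y) ∧ (s,t) = (x ∧ s, y ∨ t)`. -/
def twedge (p q : H × H) : H × H := (p.1 ⊓ q.1, p.2 ⊔ q.2)

/-- Twist fusion: `(x,y) * (s,t) = (x ∧ s, (x → t) ∧ (s → y))`. -/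
def tmul (p q : H × H) : H × H := (p.1 ⊓ q.1, (p.1 ⇨ q.2) ⊓ (q.1 ⇨ p.2))

/-- Twist implication: `(x,y) ⇒ (s,t) = ((x → s) ∧ (t → y), x ∧ t)`. -/
def timp (p q : H × H) : H × H := ((p.1 ⇨ q.1) ⊓ (q.2 ⇨ p.2), p.1 ⊓ q.2)

/-- Twist top `(⊤, ⊥)`. -/
def ttop : H × H := (⊤, ⊥)

/-- Twist bottom `(⊥, ⊤)`. -/
def tbot : H × H := (⊥, ⊤)

/-- The twist carrier `N(H,F) = {(x,y) : x ∧ y = ⊥, x ∨ y ∈ F}`. -/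
def twistSet (F : Set H) : Set (H × H) :=
  {p : H × H | p.1 ⊓ p.2 = ⊥ ∧ p.1 ⊔ p.2 ∈ F}

end Twist


section NelsonHelpers

variable {H : Type*} [HeytingAlgebra H]

lemma nh_le_himp_of_disj {x y z : H} (h : x ⊓ y = ⊥) : y ≤ x ⇨ z := by
  rw [le_himp_iff, inf_comm, h]
  exact bot_le

lemma nh_le_himp_self {a b : H} : a ⊓ b ≤ b ⇨ a := by
  rw [le_himp_iff]
  exact le_trans inf_le_left inf_le_left

/-- meet-bot for `tmul`. -/
lemma nh_tmul_inf {p q : H × H} (hq : q.1 ⊓ q.2 = ⊥) :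
    (tmul p q).1 ⊓ (tmul p q).2 = ⊥ := by
  refine le_bot_iff.mp ?_
  have h1 : p.1 ⊓ q.1 ⊓ ((p.1 ⇨ q.2) ⊓ (q.1 ⇨ p.2)) ≤ (p.1 ⊓ (p.1 ⇨ q.2)) ⊓ q.1 := by
    refine le_inf (le_inf (le_trans inf_le_left inf_le_left) (le_trans inf_le_right inf_le_left)) ?_
    exact le_trans inf_le_left inf_le_right
  calc (tmul p q).1 ⊓ (tmul p q).2
      ≤ (p.1 ⊓ (p.1 ⇨ q.2)) ⊓ q.1 := h1
    _ = p.1 ⊓ q.2 ⊓ q.1 := by rw [inf_himp]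
    _ ≤ q.1 ⊓ q.2 := le_inf inf_le_right (le_trans inf_le_left inf_le_right)
    _ = ⊥ := hq

/-- meet-bot for `timp`. -/
lemma nh_timp_inf {p q : H × H} (hq : q.1 ⊓ q.2 = ⊥) :
    (timp p q).1 ⊓ (timp p q).2 = ⊥ := by
  refine le_bot_iff.mp ?_
  have h1 : (p.1 ⇨ q.1) ⊓ (q.2 ⇨ p.2) ⊓ (p.1 ⊓ q.2) ≤ (p.1 ⊓ (p.1 ⇨ q.1)) ⊓ q.2 := by
    refine le_inf (le_inf (le_trans inf_le_right inf_le_left) (le_trans inf_le_left inf_le_left)) ?_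
    exact le_trans inf_le_right inf_le_right
  calc (timp p q).1 ⊓ (timp p q).2
      ≤ (p.1 ⊓ (p.1 ⇨ q.1)) ⊓ q.2 := h1
    _ = p.1 ⊓ q.1 ⊓ q.2 := by rw [inf_himp]
    _ ≤ q.1 ⊓ q.2 := le_inf (le_trans inf_le_left inf_le_right) inf_le_right
    _ = ⊥ := hq

/-- join lower bound for `tmul`. -/
lemma nh_tmul_sup {p q : H × H} (hp : p.1 ⊓ p.2 = ⊥) (hq : q.1 ⊓ q.2 = ⊥) :
    (p.1 ⊔ p.2) ⊓ (q.1 ⊔ q.2) ≤ (tmul p q).1 ⊔ (tmul p q).2 := by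
  have hp' : p.2 ⊓ p.1 = ⊥ := by rw [inf_comm]; exact hp
  have hq' : q.2 ⊓ q.1 = ⊥ := by rw [inf_comm]; exact hq
  rw [inf_sup_left, inf_sup_right, inf_sup_right]
  refine sup_le (sup_le ?_ ?_) (sup_le ?_ ?_)
  · exact le_sup_left
  · refine le_trans (le_inf ?_ ?_) le_sup_right
    · rw [le_himp_iff]
      refine le_trans (le_inf (le_trans inf_le_left inf_le_left) inf_le_right) ?_
      rw [hp']; exact bot_le
    · exact nh_le_himp_self
  · refine le_trans (le_inf ?_ ?_) le_sup_right
    · rw [le_himp_iff]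
      exact le_trans inf_le_left inf_le_right
    · rw [le_himp_iff]
      refine le_trans (le_inf (le_trans inf_le_left inf_le_right) inf_le_right) ?_
      rw [hq']; exact bot_le
  · refine le_trans (le_inf ?_ ?_) le_sup_right
    · rw [le_himp_iff]
      exact le_trans inf_le_left inf_le_right
    · rw [le_himp_iff]
      exact le_trans inf_le_left inf_le_left

/-- join lower bound for `timp`. -/
lemma nh_timp_sup {p q : H × H} (hp : p.1 ⊓ p.2 = ⊥) (hq : q.1 ⊓ q.2 = ⊥) :
    (p.1 ⊔ p.2) ⊓ (q.1 ⊔ q.2) ≤ (timp p q).1 ⊔ (timp p q).2 := by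
  have hp' : p.2 ⊓ p.1 = ⊥ := by rw [inf_comm]; exact hp
  rw [inf_sup_left, inf_sup_right, inf_sup_right]
  refine sup_le (sup_le ?_ ?_) (sup_le ?_ ?_)
  · refine le_trans (le_inf ?_ ?_) le_sup_left
    · rw [le_himp_iff]
      exact le_trans inf_le_left inf_le_right
    · rw [le_himp_iff]
      refine le_trans (le_inf (le_trans inf_le_left inf_le_right) inf_le_right) ?_
      rw [hq]; exact bot_le
  · refine le_trans (le_inf ?_ ?_) le_sup_left
    · rw [le_himp_iff]
      exact le_trans inf_le_left inf_le_right
    · rw [le_himp_iff]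
      exact le_trans inf_le_left inf_le_left
  · exact le_sup_right
  · refine le_trans (le_inf ?_ ?_) le_sup_left
    · rw [le_himp_iff]
      refine le_trans (le_inf (le_trans inf_le_left inf_le_left) inf_le_right) ?_
      rw [hp']; exact bot_le
    · exact nh_le_himp_self

/-- negation computes to the swap. -/
lemma nh_tneg {p : H × H} (hp : p.1 ⊓ p.2 = ⊥) : timp p tbot = (p.2, p.1) := by
  unfold timp tbot
  refine Prod.ext ?_ ?_
  · show (p.1 ⇨ ⊥) ⊓ (⊤ ⇨ p.2) = p.2
    rw [top_himp]
    exact inf_eq_right.mpr (nh_le_himp_of_disj hp)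
  · show p.1 ⊓ ⊤ = p.1
    exact inf_top_eq p.1

lemma nh_timp_self {r : H × H} (hr : r.1 ⊓ r.2 = ⊥) : timp r r = (ttop : H × H) := by
  unfold timp ttop
  refine Prod.ext ?_ hr
  show (r.1 ⇨ r.1) ⊓ (r.2 ⇨ r.2) = ⊤
  rw [himp_self, himp_self, inf_top_eq]

end NelsonHelpers

/-- For a Heyting algebra `H` and a Boolean filter `F` of `H`
(a filter containing all dense elements), the twist structure
`N(H,F) = {(x,y) : x ∧ y = ⊥, x ∨ y ∈ F}` with the twist operations is a
Nelson lattice: it is closed under the operations and contains `⊤, ⊥`;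
`tvee`/`twedge` are the join/meet for the twist order, with bounds `ttop`,
`tbot`; `tmul` is a commutative monoid operation with unit `ttop`, residuated
by `timp`; the structure is involutive and satisfies the Nelson identity. -/
theorem twist_is_nelson_lattice {H : Type*} [HeytingAlgebra H] (F : Set H)
    (hF_top : ⊤ ∈ F)
    (hF_up : ∀ a b : H, a ∈ F → a ≤ b → b ∈ F)
    (hF_inf : ∀ a b : H, a ∈ F → b ∈ F → a ⊓ b ∈ F)
    (hF_bool : ∀ a : H, aᶜ = ⊥ → a ∈ F) :
    -- closure under the operations and the constants
    (∀ p ∈ twistSet F, ∀ q ∈ twistSet F,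
        tvee p q ∈ twistSet F ∧ twedge p q ∈ twistSet F ∧
        tmul p q ∈ twistSet F ∧ timp p q ∈ twistSet F) ∧
    (ttop : H × H) ∈ twistSet F ∧ (tbot : H × H) ∈ twistSet F ∧
    -- lattice structure: `tvee` is the least upper bound for `tle`
    (∀ p ∈ twistSet F, ∀ q ∈ twistSet F,
        tle p (tvee p q) ∧ tle q (tvee p q) ∧
        ∀ r ∈ twistSet F, tle p r → tle q r → tle (tvee p q) r) ∧
    -- `twedge` is the greatest lower bound for `tle`
    (∀ p ∈ twistSet F, ∀ q ∈ twistSet F,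
        tle (twedge p q) p ∧ tle (twedge p q) q ∧
        ∀ r ∈ twistSet F, tle r p → tle r q → tle r (twedge p q)) ∧
    -- bounds
    (∀ p ∈ twistSet F, tle (tbot : H × H) p ∧ tle p (ttop : H × H)) ∧
    -- commutative monoid with unit `ttop`
    (∀ p q : H × H, tmul p q = tmul q p) ∧
    (∀ p q r : H × H, tmul (tmul p q) r = tmul p (tmul q r)) ∧
    (∀ p ∈ twistSet F, tmul ttop p = p) ∧
    -- residuation
    (∀ p ∈ twistSet F, ∀ q ∈ twistSet F, ∀ r ∈ twistSet F,
        (tle (tmul p q) r ↔ tle q (timp p r))) ∧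
    -- involutivity: `∼∼p = p` where `∼p = p ⇒ ⊥`
    (∀ p ∈ twistSet F, timp (timp p tbot) tbot = p) ∧
    -- the Nelson identity
    (∀ p ∈ twistSet F, ∀ q ∈ twistSet F,
        timp (twedge (timp (tmul p p) q)
              (timp (tmul (timp q tbot) (timp q tbot)) (timp p tbot)))
          (timp p q) = (ttop : H × H)) :=
  have tmul_comm : ∀ p q : H × H, tmul p q = tmul q p := fun p q =>
    Prod.ext (inf_comm _ _) (inf_comm _ _)
  ⟨by
    -- closure
    rintro p ⟨hp1, hp2⟩ q ⟨hq1, hq2⟩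
    have hFpq : (p.1 ⊔ p.2) ⊓ (q.1 ⊔ q.2) ∈ F := hF_inf _ _ hp2 hq2
    refine ⟨⟨?_, ?_⟩, ⟨?_, ?_⟩, ⟨nh_tmul_inf hq1, hF_up _ _ hFpq (nh_tmul_sup hp1 hq1)⟩,
      ⟨nh_timp_inf hq1, hF_up _ _ hFpq (nh_timp_sup hp1 hq1)⟩⟩
    · show (p.1 ⊔ q.1) ⊓ (p.2 ⊓ q.2) = ⊥
      refine le_bot_iff.mp ?_
      rw [inf_sup_right]
      refine sup_le ?_ ?_
      · calc p.1 ⊓ (p.2 ⊓ q.2) ≤ p.1 ⊓ p.2 := inf_le_inf_left _ inf_le_left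
          _ = ⊥ := hp1
      · calc q.1 ⊓ (p.2 ⊓ q.2) ≤ q.1 ⊓ q.2 := inf_le_inf_left _ inf_le_right
          _ = ⊥ := hq1
    · show (p.1 ⊔ q.1) ⊔ (p.2 ⊓ q.2) ∈ F
      refine hF_up _ _ hFpq ?_
      rw [inf_sup_left, inf_sup_right, inf_sup_right]
      refine sup_le (sup_le ?_ ?_) (sup_le ?_ ?_)
      · exact le_trans inf_le_left (le_sup_left.trans le_sup_left)
      · exact le_trans inf_le_right (le_sup_right.trans le_sup_left)
      · exact le_trans inf_le_left (le_sup_left.trans le_sup_left)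
      · exact le_sup_right
    · show (p.1 ⊓ q.1) ⊓ (p.2 ⊔ q.2) = ⊥
      refine le_bot_iff.mp ?_
      rw [inf_sup_left]
      refine sup_le ?_ ?_
      · calc p.1 ⊓ q.1 ⊓ p.2 ≤ p.1 ⊓ p.2 := le_inf (le_trans inf_le_left inf_le_left) inf_le_right
          _ = ⊥ := hp1
      · calc p.1 ⊓ q.1 ⊓ q.2 ≤ q.1 ⊓ q.2 := le_inf (le_trans inf_le_left inf_le_right) inf_le_right
          _ = ⊥ := hq1
    · show (p.1 ⊓ q.1) ⊔ (p.2 ⊔ q.2) ∈ F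
      refine hF_up _ _ hFpq ?_
      rw [inf_sup_left, inf_sup_right, inf_sup_right]
      refine sup_le (sup_le ?_ ?_) (sup_le ?_ ?_)
      · exact le_sup_left
      · exact le_trans inf_le_left (le_sup_left.trans le_sup_right)
      · exact le_trans inf_le_right (le_sup_right.trans le_sup_right)
      · exact le_trans inf_le_left (le_sup_left.trans le_sup_right), by
    -- ttop mem
    refine ⟨?_, ?_⟩
    · show (⊤ : H) ⊓ ⊥ = ⊥
      exact inf_bot_eq ⊤
    · show (⊤ : H) ⊔ ⊥ ∈ F
      rw [sup_bot_eq]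
      exact hF_top, by
    -- tbot mem
    refine ⟨?_, ?_⟩
    · show (⊥ : H) ⊓ ⊤ = ⊥
      exact inf_top_eq ⊥
    · show (⊥ : H) ⊔ ⊤ ∈ F
      rw [bot_sup_eq]
      exact hF_top, by
    -- tvee is lub
    rintro p - q -
    refine ⟨⟨le_sup_left, inf_le_left⟩, ⟨le_sup_right, inf_le_right⟩, ?_⟩
    rintro r - ⟨h1, h2⟩ ⟨h3, h4⟩
    exact ⟨sup_le h1 h3, le_inf h2 h4⟩, by
    -- twedge is glb
    rintro p - q -
    refine ⟨⟨inf_le_left, le_sup_left⟩, ⟨inf_le_right, le_sup_right⟩, ?_⟩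
    rintro r - ⟨h1, h2⟩ ⟨h3, h4⟩
    exact ⟨le_inf h1 h3, sup_le h2 h4⟩, by
    -- bounds
    rintro p -
    exact ⟨⟨bot_le, le_top⟩, ⟨le_top, bot_le⟩⟩,
  tmul_comm, by
    -- assoc
    intro p q r
    unfold tmul
    refine Prod.ext (inf_assoc _ _ _) ?_
    show ((p.1 ⊓ q.1) ⇨ r.2) ⊓ ((r.1 ⇨ (p.1 ⇨ q.2) ⊓ (q.1 ⇨ p.2))) =
      (p.1 ⇨ (q.1 ⇨ r.2) ⊓ (r.1 ⇨ q.2)) ⊓ ((q.1 ⊓ r.1) ⇨ p.2)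
    rw [himp_inf_distrib, himp_inf_distrib, ← himp_himp, ← himp_himp]
    rw [himp_left_comm r.1 p.1, himp_left_comm r.1 q.1]
    exact (inf_assoc _ _ _).symm, by
    -- unit
    rintro p ⟨hp1, -⟩
    unfold tmul ttop
    refine Prod.ext (top_inf_eq p.1) ?_
    show (⊤ ⇨ p.2) ⊓ (p.1 ⇨ ⊥) = p.2
    rw [top_himp]
    exact inf_eq_left.mpr (nh_le_himp_of_disj hp1), by
    -- residuation
    rintro p - q - r -
    have comm : ∀ a b c : H, a ⊓ b ≤ c ↔ b ≤ a ⇨ c := by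
      intro a b c
      rw [le_himp_iff, inf_comm]
    unfold tle tmul timp
    constructor
    · rintro ⟨h1, h2⟩
      refine ⟨le_inf ((comm p.1 q.1 r.1).mp h1) ?_, ?_⟩
      · exact (comm r.2 q.1 p.2).mp (le_himp_iff.mp (h2.trans inf_le_right))
      · exact (inf_comm p.1 r.2).trans_le (le_himp_iff.mp (h2.trans inf_le_left))
    · rintro ⟨h1, h2⟩
      refine ⟨(comm p.1 q.1 r.1).mpr (h1.trans inf_le_left), le_inf ?_ ?_⟩
      · exact (comm p.1 r.2 q.2).mp h2
      · exact (comm q.1 r.2 p.2).mp (le_himp_iff.mp (h1.trans inf_le_right)), by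
    -- involution
    rintro p ⟨hp1, -⟩
    have hp1' : p.2 ⊓ p.1 = ⊥ := by rw [inf_comm]; exact hp1
    rw [nh_tneg hp1, nh_tneg hp1'], by
    -- Nelson identity
    rintro p ⟨hp1, -⟩ q ⟨hq1, -⟩
    rw [nh_tneg hp1, nh_tneg hq1]
    have hmulp : tmul p p = (p.1, p.1 ⇨ p.2) := Prod.ext (inf_idem p.1) (inf_idem _)
    have hmulq : tmul ((q.2 : H), q.1) (q.2, q.1) = (q.2, q.2 ⇨ q.1) :=
      Prod.ext (inf_idem q.2) (inf_idem _)
    rw [hmulp, hmulq]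
    have hE : twedge (timp ((p.1 : H), p.1 ⇨ p.2) q) (timp ((q.2 : H), q.2 ⇨ q.1) (p.2, p.1)) =
        timp p q := by
      unfold twedge timp
      refine Prod.ext ?_ ?_
      · show ((p.1 ⇨ q.1) ⊓ (q.2 ⇨ p.1 ⇨ p.2)) ⊓ ((q.2 ⇨ p.2) ⊓ (p.1 ⇨ q.2 ⇨ q.1)) =
          (p.1 ⇨ q.1) ⊓ (q.2 ⇨ p.2)
        refine le_antisymm ?_ ?_
        · exact le_inf (le_trans inf_le_left inf_le_left) (le_trans inf_le_right inf_le_left)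
        · refine le_inf (le_inf inf_le_left ?_) (le_inf inf_le_right ?_)
          · rw [himp_himp, le_himp_iff]
            calc (p.1 ⇨ q.1) ⊓ (q.2 ⇨ p.2) ⊓ (q.2 ⊓ p.1) ≤ (q.2 ⇨ p.2) ⊓ q.2 :=
                le_inf (le_trans inf_le_left inf_le_right)
                  (le_trans inf_le_right inf_le_left)
              _ ≤ p.2 := by rw [inf_comm, inf_himp]; exact inf_le_right
          · rw [himp_himp, le_himp_iff]
            calc (p.1 ⇨ q.1) ⊓ (q.2 ⇨ p.2) ⊓ (p.1 ⊓ q.2) ≤ (p.1 ⇨ q.1) ⊓ p.1 :=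
                le_inf (le_trans inf_le_left inf_le_left)
                  (le_trans inf_le_right inf_le_left)
              _ ≤ q.1 := by rw [inf_comm, inf_himp]; exact inf_le_right
      · show (p.1 ⊓ q.2) ⊔ (q.2 ⊓ p.1) = p.1 ⊓ q.2
        rw [inf_comm q.2 p.1, sup_idem]
    rw [hE]
    exact nh_timp_self (nh_timp_inf hq1)⟩
end

section
/- Let H be a Heyting algebra and F1, F2 Boolean filters of H. Then N(H,F1) is a subalgebra of N(H,F2) (as subsets of H × H, closed under the twist operations) if and only if F1 ⊆ F2. -/
/-- For Boolean filters `F1, F2` of a Heyting algebra `H`,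
`N(H,F1)` is a subalgebra of `N(H,F2)` (since the operations are given by the
same formulas, this amounts to the inclusion of the carriers) iff `F1 ⊆ F2`. -/
theorem twist_subalgebra_iff_subset {H : Type*} [HeytingAlgebra H]
    (F1 F2 : Set H)
    (hF1_top : ⊤ ∈ F1)
    (hF1_up : ∀ a b : H, a ∈ F1 → a ≤ b → b ∈ F1)
    (hF1_inf : ∀ a b : H, a ∈ F1 → b ∈ F1 → a ⊓ b ∈ F1)
    (hF1_bool : ∀ a : H, aᶜ = ⊥ → a ∈ F1)
    (hF2_top : ⊤ ∈ F2)
    (hF2_up : ∀ a b : H, a ∈ F2 → a ≤ b → b ∈ F2)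
    (hF2_inf : ∀ a b : H, a ∈ F2 → b ∈ F2 → a ⊓ b ∈ F2)
    (hF2_bool : ∀ a : H, aᶜ = ⊥ → a ∈ F2) :
    twistSet F1 ⊆ twistSet F2 ↔ F1 ⊆ F2 := by
  constructor
  · intro h a ha
    have hp : ((a, ⊥) : H × H) ∈ twistSet F1 := by
      constructor
      · simp
      · simpa using ha
    have := h hp
    simpa [twistSet] using this.2
  · intro h p hp
    exact ⟨hp.1, h hp.2⟩
end

section
/- In a Nelson lattice, if a² = b² and (∼a)² = (∼b)² then a = b. -/
namespace NelsonStruct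

variable {A : Type*} [Lattice A] [BoundedOrder A] (N : NelsonStruct A)

lemma le_iff_imp_eq_top (a b : A) : a ≤ b ↔ N.imp a b = ⊤ := by
  have h := N.res a ⊤ b
  rw [N.mul_comm, N.top_mul] at h
  constructor
  · intro hab; exact le_antisymm le_top (h.mp hab)
  · intro hab; exact h.mpr (le_of_eq hab.symm)

lemma mul_self_le (a : A) : N.mul a a ≤ a := by
  rw [N.res]
  rw [(N.le_iff_imp_eq_top a a).mp le_rfl]
  exact le_top

lemma imp_top_eq (c : A) : N.imp ⊤ c = c := by
  apply le_antisymm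
  · have := (N.res ⊤ (N.imp ⊤ c) c).mpr le_rfl
    rwa [N.top_mul] at this
  · have : N.mul ⊤ c ≤ c := by rw [N.top_mul]
    exact (N.res ⊤ c c).mp this

lemma le_of_hyps (a b : A) (h1 : N.sq a = N.sq b) (h2 : N.sq (N.sneg a) = N.sq (N.sneg b)) :
    a ≤ b := by
  have e1 : N.imp (N.mul a a) b = ⊤ := by
    apply (N.le_iff_imp_eq_top _ _).mp
    have : N.sq a ≤ b := h1 ▸ N.mul_self_le b
    exact this
  have e2 : N.imp (N.mul (N.imp b ⊥) (N.imp b ⊥)) (N.imp a ⊥) = ⊤ := by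
    apply (N.le_iff_imp_eq_top _ _).mp
    have : N.sq (N.sneg b) ≤ N.sneg a := h2 ▸ N.mul_self_le (N.sneg a)
    exact this
  have hn := N.nelson a b
  rw [e1, e2, inf_idem, N.imp_top_eq] at hn
  exact (N.le_iff_imp_eq_top a b).mpr hn

end NelsonStruct

/-- In a Nelson lattice, if `a² = b²` and `(∼a)² = (∼b)²`
then `a = b`. -/
theorem NelsonStruct.eq_of_sq_eq {A : Type*} [Lattice A] [BoundedOrder A]
    (N : NelsonStruct A) (a b : A)
    (h1 : N.sq a = N.sq b) (h2 : N.sq (N.sneg a) = N.sq (N.sneg b)) :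
    a = b := by
  apply le_antisymm
  · exact N.le_of_hyps a b h1 h2
  · exact N.le_of_hyps b a h1.symm h2.symm
end

section
/- Let M = ⟨H, □, ◇⟩ be a modal Heyting algebra (Heyting algebra with □a ∧ ◇(¬a ∧ b) = ⊥). Define on the full twist structure N(H) = {(x,y) : x ∧ y = ⊥} the operators ■(x,y) = (□x, ◇y) and ♦(x,y) = (◇x, □y). Then ■ and ♦ are well defined on N(H) (i.e., □x ∧ ◇y = ⊥ whenever x ∧ y = ⊥), and ⟨N(H), ■, ♦⟩ is a modal Nelson lattice: ♦p = ∼■∼p, p² = q² implies (■p)² = (■q)² and (♦p)² = (♦q)², and (p ∧ q)² = ⊥ implies (■p ∧ ♦q)² = ⊥. -/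
/-- The full twist carrier `N(H) = {(x,y) : x ∧ y = ⊥}`. -/
def fullTwistSet (H : Type*) [HeytingAlgebra H] : Set (H × H) :=
  {p : H × H | p.1 ⊓ p.2 = ⊥}

/-- The twist box `■(x,y) = (□x, ◇y)`. -/
def tbox {H : Type*} [HeytingAlgebra H] (box dia : H → H) (p : H × H) :
    H × H := (box p.1, dia p.2)

/-- The twist diamond `♦(x,y) = (◇x, □y)`. -/
def tdia {H : Type*} [HeytingAlgebra H] (box dia : H → H) (p : H × H) :
    H × H := (dia p.1, box p.2)

/-- Let `⟨H, □, ◇⟩` be a modal Heyting algebra (i.e.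
`□a ⊓ ◇(aᶜ ⊓ b) = ⊥`). On the full twist structure `N(H)` define
`■(x,y) = (□x, ◇y)` and `♦(x,y) = (◇x, □y)`. Then `■` and `♦` are well
defined on `N(H)`, and `⟨N(H), ■, ♦⟩` is a modal Nelson lattice:
`♦p = ∼■∼p`, `p² = q²` implies `(■p)² = (■q)²` and `(♦p)² = (♦q)²`, and
`(p ∧ q)² = ⊥` implies `(■p ∧ ♦q)² = ⊥`. -/
theorem twist_modal_nelson {H : Type*} [HeytingAlgebra H]
    (box dia : H → H)
    (hmH : ∀ a b : H, box a ⊓ dia (aᶜ ⊓ b) = ⊥) :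
    -- well-definedness
    (∀ p ∈ fullTwistSet H, tbox box dia p ∈ fullTwistSet H ∧
        tdia box dia p ∈ fullTwistSet H) ∧
    -- (mN1): ♦p = ∼■∼p
    (∀ p ∈ fullTwistSet H,
        tdia box dia p = timp (tbox box dia (timp p tbot)) tbot) ∧
    -- (mN2): p² = q² implies (■p)² = (■q)² and (♦p)² = (♦q)²
    (∀ p ∈ fullTwistSet H, ∀ q ∈ fullTwistSet H, tmul p p = tmul q q →
        tmul (tbox box dia p) (tbox box dia p) =
          tmul (tbox box dia q) (tbox box dia q) ∧
        tmul (tdia box dia p) (tdia box dia p) =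
          tmul (tdia box dia q) (tdia box dia q)) ∧
    -- (mN3'): (p ∧ q)² = ⊥ implies (■p ∧ ♦q)² = ⊥
    (∀ p ∈ fullTwistSet H, ∀ q ∈ fullTwistSet H,
        tmul (twedge p q) (twedge p q) = tbot →
        tmul (twedge (tbox box dia p) (tdia box dia q))
             (twedge (tbox box dia p) (tdia box dia q)) = tbot) := by
  -- auxiliary facts
  have key : ∀ x y : H, x ⊓ y = ⊥ → box x ⊓ dia y = ⊥ := by
    intro x y h
    have hy : y ≤ xᶜ := by
      rw [← himp_bot]
      exact le_himp_iff.2 (le_of_eq ((inf_comm y x).trans h))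
    have e : xᶜ ⊓ y = y := inf_eq_right.2 hy
    calc box x ⊓ dia y = box x ⊓ dia (xᶜ ⊓ y) := by rw [e]
      _ = ⊥ := hmH x y
  have himp_of_disj : ∀ b c : H, b ⊓ c = ⊥ → b ⇨ c = bᶜ := by
    intro b c h
    apply le_antisymm
    · rw [← himp_bot]
      exact le_himp_iff.2 (by rw [himp_inf_self, inf_comm, h])
    · exact le_himp_iff.2 (by rw [compl_inf_self]; exact bot_le)
  refine ⟨?_, ?_, ?_, ?_⟩
  · intro p hp
    have hp' : p.1 ⊓ p.2 = ⊥ := hp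
    have hp'' : p.2 ⊓ p.1 = ⊥ := (inf_comm p.2 p.1).trans hp'
    constructor
    · show box p.1 ⊓ dia p.2 = ⊥
      exact key p.1 p.2 hp'
    · show dia p.1 ⊓ box p.2 = ⊥
      exact (inf_comm (dia p.1) (box p.2)).trans (key p.2 p.1 hp'')
  · intro p hp
    have hp' : p.1 ⊓ p.2 = ⊥ := hp
    have hp'' : p.2 ⊓ p.1 = ⊥ := (inf_comm p.2 p.1).trans hp'
    have h1 : box p.2 ⊓ dia p.1 = ⊥ := key p.2 p.1 hp''
    have hy : p.2 ≤ p.1ᶜ := by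
      rw [← himp_bot]
      exact le_himp_iff.2 (le_of_eq hp'')
    have hd : dia p.1 ≤ (box p.2)ᶜ := by
      rw [← himp_bot]
      exact le_himp_iff.2 (le_of_eq ((inf_comm (dia p.1) (box p.2)).trans h1))
    simp only [timp, tbox, tdia, tbot, himp_bot, top_himp, inf_top_eq]
    rw [inf_eq_right.2 hy, inf_eq_right.2 hd]
  · intro p hp q hq hsq
    have hp' : p.1 ⊓ p.2 = ⊥ := hp
    have hq' : q.1 ⊓ q.2 = ⊥ := hq
    have h1 : p.1 = q.1 := by
      have := congrArg Prod.fst hsq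
      simpa [tmul, inf_idem] using this
    have hp2 : q.1 ⊓ p.2 = ⊥ := h1 ▸ hp'
    have hp2' : p.2 ⊓ q.1 = ⊥ := (inf_comm p.2 q.1).trans hp2
    have hq2' : q.2 ⊓ q.1 = ⊥ := (inf_comm q.2 q.1).trans hq'
    have e1 : box q.1 ⇨ dia p.2 = (box q.1)ᶜ := himp_of_disj _ _ (key q.1 p.2 hp2)
    have e1' : box q.1 ⇨ dia q.2 = (box q.1)ᶜ := himp_of_disj _ _ (key q.1 q.2 hq')
    have e2 : dia q.1 ⇨ box p.2 = (dia q.1)ᶜ := by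
      apply himp_of_disj
      exact (inf_comm (dia q.1) (box p.2)).trans (key p.2 q.1 hp2')
    have e2' : dia q.1 ⇨ box q.2 = (dia q.1)ᶜ := by
      apply himp_of_disj
      exact (inf_comm (dia q.1) (box q.2)).trans (key q.2 q.1 hq2')
    constructor
    · simp only [tmul, tbox, inf_idem, h1, e1, e1']
    · simp only [tmul, tdia, inf_idem, h1, e2, e2']
  · intro p hp q hq h
    have h1 : p.1 ⊓ q.1 = ⊥ := by
      have := congrArg Prod.fst h
      simpa [tmul, twedge, tbot, inf_idem] using this
    have h2 : box p.1 ⊓ dia q.1 = ⊥ := key p.1 q.1 h1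
    simp only [tmul, twedge, tbox, tdia, tbot, inf_idem, h2, Prod.mk.injEq]
    simp
end

section
/- Let H be a Heyting algebra and x, y ∈ H. The following are equivalent: (1) x ∧ y = ⊥ and x ∨ y is dense; (2) x ∧ y = ⊥ and ¬x ∧ ¬y = ⊥; (3) ¬x = ¬¬y; (4) ¬x → x = ¬y. -/
lemma compl_himp_self_aux {H : Type*} [HeytingAlgebra H] (a : H) : aᶜ ⇨ a = aᶜᶜ := by
  apply le_antisymm
  · rw [le_compl_iff_disjoint_right, disjoint_iff, ← le_bot_iff]
    calc (aᶜ ⇨ a) ⊓ aᶜ ≤ a ⊓ aᶜ :=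
          le_inf (by rw [inf_comm]; exact inf_himp_le) inf_le_right
      _ = ⊥ := inf_compl_self a
  · rw [le_himp_iff]
    calc aᶜᶜ ⊓ aᶜ = ⊥ := by simp
      _ ≤ a := bot_le

/-- In a Heyting algebra `H`, for `x, y ∈ H` the following are
equivalent: (1) `x ⊓ y = ⊥` and `x ⊔ y` is dense; (2) `x ⊓ y = ⊥` and
`xᶜ ⊓ yᶜ = ⊥`; (3) `xᶜ = yᶜᶜ`; (4) `xᶜ ⇨ x = yᶜ`. -/
theorem heyting_dense_equivalences {H : Type*} [HeytingAlgebra H] (x y : H) :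
    List.TFAE
      [x ⊓ y = ⊥ ∧ (x ⊔ y)ᶜ = ⊥,
       x ⊓ y = ⊥ ∧ xᶜ ⊓ yᶜ = ⊥,
       xᶜ = yᶜᶜ,
       xᶜ ⇨ x = yᶜ] := by
  tfae_have 1 ↔ 2 := by rw [compl_sup]
  tfae_have 2 → 3 := by
    rintro ⟨h1, h2⟩
    apply le_antisymm
    · rw [le_compl_iff_disjoint_right, disjoint_iff]; exact h2
    · have : y ≤ xᶜ := by
        rw [le_compl_iff_disjoint_right, disjoint_iff, inf_comm]; exact h1
      calc yᶜᶜ ≤ xᶜᶜᶜ := compl_anti (compl_anti this)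
        _ = xᶜ := compl_compl_compl x
  tfae_have 3 → 2 := by
    intro h
    constructor
    · have hy : y ≤ xᶜ := h ▸ le_compl_compl
      rw [← le_bot_iff]
      calc x ⊓ y ≤ x ⊓ xᶜ := inf_le_inf_left x hy
        _ = ⊥ := inf_compl_self x
    · rw [h]; simp
  tfae_have 3 → 4 := by
    intro h
    rw [compl_himp_self_aux, h, compl_compl_compl]
  tfae_have 4 → 3 := by
    intro h
    rw [compl_himp_self_aux] at h
    rw [← compl_compl_compl x, h]
  tfae_finish
end

section
/- Let M = ⟨H, □, ◇⟩ be a modal Heyting algebra satisfying ¬¬□a = ¬◇¬a and ¬□¬a = ¬¬◇a for all a. If x ∧ y = ⊥ and x ∨ y is dense in H, then □x ∨ ◇y is dense in H. -/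
/-- Let `⟨H, □, ◇⟩` be a modal Heyting algebra (satisfying
`a ⊓ b = ⊥ → □a ⊓ ◇b = ⊥`) with `(□a)ᶜᶜ = (◇aᶜ)ᶜ` and `(□aᶜ)ᶜ = (◇a)ᶜᶜ`
for all `a`. If `x ⊓ y = ⊥` and `x ⊔ y` is dense, then `□x ⊔ ◇y` is dense. -/
theorem modal_dense_preserved {H : Type*} [HeytingAlgebra H]
    (box dia : H → H)
    (hmH : ∀ a b : H, a ⊓ b = ⊥ → box a ⊓ dia b = ⊥)
    (h1 : ∀ a : H, (box a)ᶜᶜ = (dia aᶜ)ᶜ)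
    (h2 : ∀ a : H, (box aᶜ)ᶜ = (dia a)ᶜᶜ)
    (x y : H) (hxy : x ⊓ y = ⊥) (hdense : (x ⊔ y)ᶜ = ⊥) :
    (box x ⊔ dia y)ᶜ = ⊥ := by
  rw [compl_sup] at hdense ⊢
  -- xᶜᶜ = yᶜ
  have hyx : y ≤ xᶜ := le_compl_iff_disjoint_left.2 (disjoint_iff.2 hxy)
  have hxyc : xᶜᶜ ≤ yᶜ := compl_le_compl hyx
  have hycx : yᶜ ≤ xᶜᶜ :=
    le_compl_iff_disjoint_left.2 (disjoint_iff.2 hdense)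
  have key : xᶜᶜ = yᶜ := le_antisymm hxyc hycx
  -- □xᶜᶜ ⊓ ◇xᶜ = ⊥
  have hb : box xᶜᶜ ⊓ dia xᶜ = ⊥ := hmH _ _ (by simp)
  have hb' : box yᶜ ≤ (dia xᶜ)ᶜ := by
    rw [← key]
    exact le_compl_iff_disjoint_right.2 (disjoint_iff.2 hb)
  rw [← h1] at hb'
  -- hence (□x)ᶜ ≤ (□yᶜ)ᶜ = (◇y)ᶜᶜ
  have : (box x)ᶜ ≤ (dia y)ᶜᶜ := by
    rw [← h2]
    exact (le_compl_compl.trans (compl_le_compl hb'))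
  exact le_antisymm (le_trans (inf_le_inf_right _ this)
    (by rw [inf_comm]; simp)) bot_le
end
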